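/- The minimal cardinality of a generating set of a finite group G equals the minimal length ℓ of a chain of subgroups {e} = H_0 < H_1 < ... < H_ℓ = G such that φ(H_i, H_{i+1}) ≠ 0 for all i, where φ(H,K) := ∑_{L ∈ [H,K]} μ(L,K)·|L:H|. -/

import Mathlib

open scoped Classical

section Aux

variable {G : Type*} [Group G] [Fintype G]

private lemma stmt8_colsum (μ : Subgroup G → Subgroup G → ℤ)
    (hμ_self : ∀ K : Subgroup G, μ K K = 1)
    (hμ_lt : ∀ K K' : Subgroup G, K < K' →
      μ K K' = -∑ L ∈ Finset.univ.filter (fun L : Subgroup G => K < L ∧ L ≤ K'), μ L K')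
    (M K : Subgroup G) (h : M ≤ K) :
    ∑ L ∈ Finset.univ.filter (fun L : Subgroup G => M ≤ L ∧ L ≤ K), μ L K
      = if M = K then 1 else 0 := by
  rcases eq_or_lt_of_le h with rfl | hlt
  · rw [if_pos rfl]
    have he : Finset.univ.filter (fun L : Subgroup G => M ≤ L ∧ L ≤ M) = {M} := by
      ext L
      simp only [Finset.mem_filter, Finset.mem_univ, true_and, Finset.mem_singleton]
      constructor
      · rintro ⟨h1, h2⟩; exact le_antisymm h2 h1
      · rintro rfl; exact ⟨le_rfl, le_rfl⟩
    rw [he, Finset.sum_singleton, hμ_self]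
  · rw [if_neg hlt.ne]
    have hsplit : Finset.univ.filter (fun L : Subgroup G => M ≤ L ∧ L ≤ K)
        = insert M (Finset.univ.filter (fun L : Subgroup G => M < L ∧ L ≤ K)) := by
      ext L
      simp only [Finset.mem_insert, Finset.mem_filter, Finset.mem_univ, true_and]
      constructor
      · rintro ⟨h1, h2⟩
        rcases eq_or_lt_of_le h1 with rfl | h1
        · exact Or.inl rfl
        · exact Or.inr ⟨h1, h2⟩
      · rintro (rfl | ⟨h1, h2⟩)
        · exact ⟨le_rfl, hlt.le⟩
        · exact ⟨h1.le, h2⟩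
    rw [hsplit, Finset.sum_insert (by simp), hμ_lt M K hlt]
    ring

omit [Fintype G] in
private lemma stmt8_card_mul_relindex (H L : Subgroup G) (h : H ≤ L) :
    Nat.card H * H.relIndex L = Nat.card L := by
  have := Subgroup.card_mul_index (H.subgroupOf L)
  rwa [Nat.card_congr (Subgroup.subgroupOfEquivOfLe h).toEquiv] at this

private lemma stmt8_phi_count (μ : Subgroup G → Subgroup G → ℤ)
    (hμ_self : ∀ K : Subgroup G, μ K K = 1)
    (hμ_lt : ∀ K K' : Subgroup G, K < K' →
      μ K K' = -∑ L ∈ Finset.univ.filter (fun L : Subgroup G => K < L ∧ L ≤ K'), μ L K')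
    (H K : Subgroup G) (h : H ≤ K) :
    (Nat.card H : ℤ) * (∑ L ∈ Finset.univ.filter (fun L : Subgroup G => H ≤ L ∧ L ≤ K),
        μ L K * (H.relIndex L : ℤ))
      = (Finset.univ.filter (fun g : G =>
          Subgroup.closure (insert g (H : Set G)) = K)).card := by
  have key : ∀ L ∈ Finset.univ.filter (fun L : Subgroup G => H ≤ L ∧ L ≤ K),
      (Nat.card H : ℤ) * (μ L K * (H.relIndex L : ℤ))
        = ∑ g : G, μ L K *
            (if Subgroup.closure (insert g (H : Set G)) ≤ L then (1:ℤ) else 0) := by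
    intro L hL
    obtain ⟨hHL, hLK⟩ := (Finset.mem_filter.mp hL).2
    have hsum : ∑ g : G, (if Subgroup.closure (insert g (H : Set G)) ≤ L then (1:ℤ) else 0)
        = (Nat.card L : ℤ) := by
      rw [Finset.sum_boole]
      have : (Finset.univ.filter (fun g : G => Subgroup.closure (insert g (H : Set G)) ≤ L))
          = Finset.univ.filter (fun g : G => g ∈ L) := by
        apply Finset.filter_congr
        intro g _
        simp [Subgroup.closure_le, Set.insert_subset_iff, hHL]
      rw [this, Nat.card_eq_fintype_card, Fintype.card_subtype]
    rw [← Finset.mul_sum, hsum]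
    have := stmt8_card_mul_relindex H L hHL
    push_cast [← this]
    ring
  rw [Finset.mul_sum, Finset.sum_congr rfl key, Finset.sum_comm]
  have inner : ∀ g : G,
      ∑ L ∈ Finset.univ.filter (fun L : Subgroup G => H ≤ L ∧ L ≤ K),
        μ L K * (if Subgroup.closure (insert g (H : Set G)) ≤ L then (1:ℤ) else 0)
      = if Subgroup.closure (insert g (H : Set G)) = K then (1:ℤ) else 0 := by
    intro g
    set M := Subgroup.closure (insert g (H : Set G)) with hM
    have hHM : H ≤ M := fun x hx => Subgroup.subset_closure (Set.mem_insert_of_mem _ hx)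
    have hstep : ∑ L ∈ Finset.univ.filter (fun L : Subgroup G => H ≤ L ∧ L ≤ K),
        μ L K * (if M ≤ L then (1:ℤ) else 0)
        = ∑ L ∈ Finset.univ.filter (fun L : Subgroup G => M ≤ L ∧ L ≤ K), μ L K := by
      have e1 : ∀ L : Subgroup G, μ L K * (if M ≤ L then (1:ℤ) else 0)
          = if M ≤ L then μ L K else 0 := by
        intro L; split <;> simp
      rw [Finset.sum_congr rfl (fun L _ => e1 L), ← Finset.sum_filter,
        Finset.filter_filter]
      congr 1
      apply Finset.filter_congr
      intro L _
      constructor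
      · rintro ⟨⟨_, h2⟩, h3⟩; exact ⟨h3, h2⟩
      · rintro ⟨h1, h2⟩; exact ⟨⟨hHM.trans h1, h2⟩, h1⟩
    rw [hstep]
    by_cases hMK : M ≤ K
    · rw [stmt8_colsum μ hμ_self hμ_lt M K hMK]
    · have hempty : Finset.univ.filter (fun L : Subgroup G => M ≤ L ∧ L ≤ K) = ∅ := by
        apply Finset.filter_false_of_mem
        rintro L _ ⟨h1, h2⟩
        exact hMK (h1.trans h2)
      rw [hempty, Finset.sum_empty, if_neg (fun hEq => hMK (le_of_eq hEq))]
  rw [Finset.sum_congr rfl (fun g _ => inner g), Finset.sum_boole]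

def SChain (ℓ : ℕ) (T : Subgroup G) : Prop :=
  ∃ H : Fin (ℓ + 1) → Subgroup G, H 0 = ⊥ ∧ H (Fin.last ℓ) = T ∧
    (∀ i : Fin ℓ, H i.castSucc < H i.succ) ∧
    (∀ i : Fin ℓ, ∃ g : G, Subgroup.closure (insert g (H i.castSucc : Set G)) = H i.succ)

omit [Fintype G] in
private lemma stmt8_closure_insert_coe (g : G) (s : Set G) :
    Subgroup.closure (insert g ((Subgroup.closure s : Subgroup G) : Set G))
      = Subgroup.closure (insert g s) := by
  apply le_antisymm
  · rw [Subgroup.closure_le]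
    rintro x (rfl | hx)
    · exact Subgroup.subset_closure (Set.mem_insert _ _)
    · exact Subgroup.closure_mono (Set.subset_insert _ _) hx
  · apply Subgroup.closure_mono
    exact Set.insert_subset_insert Subgroup.subset_closure

omit [Fintype G] in
private lemma stmt8_exists_chain (S : Finset G) :
    ∃ ℓ ≤ S.card, SChain ℓ (Subgroup.closure (S : Set G)) := by
  classical
  induction S using Finset.induction_on with
  | empty =>
    refine ⟨0, le_rfl, fun _ => ⊥, rfl, ?_, fun i => i.elim0, fun i => i.elim0⟩
    simp
  | @insert a S ha ih =>
    obtain ⟨ℓ, hℓ, H, h0, hlast, hstrict, hgen⟩ := ih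
    by_cases haS : a ∈ Subgroup.closure (S : Set G)
    · refine ⟨ℓ, hℓ.trans (Finset.card_le_card (Finset.subset_insert a S)), H, h0, ?_, hstrict, hgen⟩
      rw [hlast]
      apply le_antisymm
      · exact Subgroup.closure_mono (by exact_mod_cast Finset.subset_insert a S)
      · rw [Subgroup.closure_le]
        push_cast
        rintro x (rfl | hx)
        · exact haS
        · exact Subgroup.subset_closure hx
    · refine ⟨ℓ + 1, ?_, Fin.snoc H (Subgroup.closure ((insert a S : Finset G) : Set G)), ?_, ?_, ?_, ?_⟩
      · rw [Finset.card_insert_of_notMem ha]; omega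
      · have : (0 : Fin (ℓ + 2)) = Fin.castSucc 0 := rfl
        rw [this, Fin.snoc_castSucc, h0]
      · rw [Fin.snoc_last]
      · intro i
        refine Fin.lastCases ?_ ?_ i
        · rw [Fin.succ_last, Fin.snoc_castSucc, Fin.snoc_last, hlast]
          refine lt_of_le_of_ne (Subgroup.closure_mono (by exact_mod_cast Finset.subset_insert a S)) ?_
          intro hEq
          exact haS (hEq ▸ Subgroup.subset_closure (by exact_mod_cast Finset.mem_insert_self a S))
        · intro j
          rw [Fin.succ_castSucc, Fin.snoc_castSucc, Fin.snoc_castSucc]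
          exact hstrict j
      · intro i
        refine Fin.lastCases ?_ ?_ i
        · refine ⟨a, ?_⟩
          rw [Fin.succ_last, Fin.snoc_castSucc, Fin.snoc_last, hlast, stmt8_closure_insert_coe]
          congr 1
          push_cast
          rfl
        · intro j
          obtain ⟨g, hg⟩ := hgen j
          refine ⟨g, ?_⟩
          rw [Fin.succ_castSucc, Fin.snoc_castSucc, Fin.snoc_castSucc]
          exact hg

private lemma stmt8_schain_gen {ℓ : ℕ} (h : SChain ℓ (⊤ : Subgroup G)) :
    ∃ S : Finset G, S.card = ℓ ∧ Subgroup.closure (S : Set G) = ⊤ := by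
  obtain ⟨H, h0, hlast, hstrict, hgen⟩ := h
  choose g hg using hgen
  have hmono : StrictMono H := Fin.strictMono_iff_lt_succ.mpr hstrict
  have hginj : Function.Injective g := by
    intro i j hij
    by_contra hne
    wlog hlt : i < j generalizing i j
    · exact this hij.symm (Ne.symm hne) ((not_lt.mp hlt).lt_of_ne (Ne.symm hne))
    have h1 : g i ∈ H i.succ := hg i ▸ Subgroup.subset_closure (Set.mem_insert _ _)
    have h2 : H i.succ ≤ H j.castSucc := hmono.monotone (by
      have : (i : ℕ) < (j : ℕ) := hlt
      rw [Fin.le_def, Fin.val_succ, Fin.coe_castSucc]; omega)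
    have h3 : g j ∈ H j.castSucc := hij ▸ h2 h1
    have : Subgroup.closure (insert (g j) ((H j.castSucc : Subgroup G) : Set G)) = H j.castSucc := by
      rw [Set.insert_eq_self.mpr h3, Subgroup.closure_eq]
    exact (hstrict j).ne' ((hg j).symm.trans this)
  refine ⟨Finset.univ.image g, ?_, ?_⟩
  · rw [Finset.card_image_of_injective _ hginj, Finset.card_univ, Fintype.card_fin]
  · have hle : ∀ i : Fin (ℓ + 1), H i ≤ Subgroup.closure ((Finset.univ.image g : Finset G) : Set G) := by
      intro i
      induction i using Fin.induction with
      | zero => rw [h0]; exact bot_le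
      | succ j ihj =>
        rw [← hg j, Subgroup.closure_le]
        rintro x (rfl | hx)
        · exact Subgroup.subset_closure (by simp)
        · exact ihj hx
    exact le_antisymm le_top (hlast ▸ hle (Fin.last ℓ))

end Aux

open scoped Classical in
/-- The minimal cardinality of a generating set of a finite group `G` equals the
minimal length `ℓ` of a chain of subgroups `1 = H₀ < H₁ < ... < H_ℓ = G` with
`φ(Hᵢ, Hᵢ₊₁) ≠ 0` for all `i`, where `φ(H,K) = ∑_{L ∈ [H,K]} μ(L,K)·|L:H|`. -/
theorem stmt8 {G : Type*} [Group G] [Fintype G]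
    (μ : Subgroup G → Subgroup G → ℤ)
    (hμ_self : ∀ K : Subgroup G, μ K K = 1)
    (hμ_lt : ∀ K K' : Subgroup G, K < K' →
      μ K K' = -∑ L ∈ Finset.univ.filter (fun L : Subgroup G => K < L ∧ L ≤ K'), μ L K') :
    sInf {n : ℕ | ∃ S : Finset G, S.card = n ∧ Subgroup.closure (S : Set G) = ⊤} =
    sInf {ℓ : ℕ | ∃ H : Fin (ℓ + 1) → Subgroup G,
      H 0 = ⊥ ∧ H (Fin.last ℓ) = ⊤ ∧
      (∀ i : Fin ℓ, H i.castSucc < H i.succ) ∧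
      (∀ i : Fin ℓ,
        (∑ K ∈ Finset.univ.filter
            (fun K : Subgroup G => H i.castSucc ≤ K ∧ K ≤ H i.succ),
          μ K (H i.succ) * ((H i.castSucc).relIndex K : ℤ)) ≠ 0)} := by
  set A := {n : ℕ | ∃ S : Finset G, S.card = n ∧ Subgroup.closure (S : Set G) = ⊤} with hA
  set B := {ℓ : ℕ | ∃ H : Fin (ℓ + 1) → Subgroup G,
      H 0 = ⊥ ∧ H (Fin.last ℓ) = ⊤ ∧
      (∀ i : Fin ℓ, H i.castSucc < H i.succ) ∧
      (∀ i : Fin ℓ,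
        (∑ K ∈ Finset.univ.filter
            (fun K : Subgroup G => H i.castSucc ≤ K ∧ K ≤ H i.succ),
          μ K (H i.succ) * ((H i.castSucc).relIndex K : ℤ)) ≠ 0)} with hB
  -- B membership is equivalent to SChain ℓ ⊤
  have hBiff : ∀ ℓ : ℕ, ℓ ∈ B ↔ SChain ℓ (⊤ : Subgroup G) := by
    intro ℓ
    constructor
    · rintro ⟨H, h0, hlast, hstrict, hphi⟩
      refine ⟨H, h0, hlast, hstrict, fun i => ?_⟩
      have hle : H i.castSucc ≤ H i.succ := (hstrict i).le
      have hpc := stmt8_phi_count μ hμ_self hμ_lt (H i.castSucc) (H i.succ) hle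
      have hne : ((Finset.univ.filter (fun g : G =>
          Subgroup.closure (insert g ((H i.castSucc : Subgroup G) : Set G)) = H i.succ)).card : ℤ) ≠ 0 := by
        rw [← hpc]
        exact mul_ne_zero (by exact_mod_cast Nat.card_pos.ne') (hphi i)
      have hne' : (Finset.univ.filter (fun g : G =>
          Subgroup.closure (insert g ((H i.castSucc : Subgroup G) : Set G)) = H i.succ)).card ≠ 0 := by
        exact_mod_cast hne
      obtain ⟨g, hg⟩ := Finset.card_pos.mp (Nat.pos_of_ne_zero hne')
      exact ⟨g, (Finset.mem_filter.mp hg).2⟩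
    · rintro ⟨H, h0, hlast, hstrict, hgen⟩
      refine ⟨H, h0, hlast, hstrict, fun i => ?_⟩
      have hle : H i.castSucc ≤ H i.succ := (hstrict i).le
      have hpc := stmt8_phi_count μ hμ_self hμ_lt (H i.castSucc) (H i.succ) hle
      obtain ⟨g, hg⟩ := hgen i
      have hmem : g ∈ Finset.univ.filter (fun g : G =>
          Subgroup.closure (insert g ((H i.castSucc : Subgroup G) : Set G)) = H i.succ) :=
        Finset.mem_filter.mpr ⟨Finset.mem_univ g, hg⟩
      have hcard : (0 : ℤ) < ((Finset.univ.filter (fun g : G =>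
          Subgroup.closure (insert g ((H i.castSucc : Subgroup G) : Set G)) = H i.succ)).card : ℤ) := by
        exact_mod_cast Finset.card_pos.mpr ⟨g, hmem⟩
      intro hzero
      rw [hzero, mul_zero] at hpc
      omega
  have hAne : A.Nonempty := by
    refine ⟨(Finset.univ : Finset G).card, (Finset.univ : Finset G), rfl, ?_⟩
    simp
  have hBne : B.Nonempty := by
    obtain ⟨ℓ, _, hc⟩ := stmt8_exists_chain (Finset.univ : Finset G)
    refine ⟨ℓ, (hBiff ℓ).mpr ?_⟩
    have : Subgroup.closure ((Finset.univ : Finset G) : Set G) = (⊤ : Subgroup G) := by simp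
    rwa [this] at hc
  apply le_antisymm
  · -- sInf A ≤ sInf B
    have hmem := Nat.sInf_mem hBne
    obtain ⟨S, hcard, hgen⟩ := stmt8_schain_gen ((hBiff _).mp hmem)
    exact Nat.sInf_le ⟨S, hcard, hgen⟩
  · -- sInf B ≤ sInf A
    obtain ⟨S, hcard, hgen⟩ := Nat.sInf_mem hAne
    obtain ⟨ℓ, hℓ, hc⟩ := stmt8_exists_chain S
    rw [hgen] at hc
    exact le_trans (Nat.sInf_le ((hBiff ℓ).mpr hc)) (hcard ▸ hℓ)
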